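/- In the free bialgebra B = k⟨g,x⟩, the iterated comultiplication Δ^{(n+1)} applied to C_{p,q} equals the sum over all tuples (k_1,...,k_n) of nonnegative integers with k_1+···+k_n ≤ q of C_{p+k_1+···+k_n, q-(k_1+···+k_n)} ⊗ C_{p+k_1+···+k_{n-1}, k_n} ⊗ ··· ⊗ C_{p+k_1, k_2} ⊗ C_{p, k_1}. -/

import Mathlib

open FreeAlgebra

set_option synthInstance.maxHeartbeats 1000000
set_option maxHeartbeats 1000000

variable (kk : Type) [Field kk]

/-- The free algebra `B = k⟨g,x⟩` on two generators. -/
abbrev FreeBi (kk : Type) [Field kk] := FreeAlgebra kk (Fin 2)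

/-- The generator `g`. -/
noncomputable def gB : FreeBi kk := FreeAlgebra.ι kk 0

/-- The generator `x`. -/
noncomputable def xB : FreeBi kk := FreeAlgebra.ι kk 1

/-- The monomial (word) associated to a function `f : Fin n → Fin 2`. -/
noncomputable def wordB {n : ℕ} (f : Fin n → Fin 2) : FreeBi kk :=
  (List.ofFn fun i => FreeAlgebra.ι kk (f i)).prod

/-- `CB a b` is the sum of all monomials with `a` occurrences of `g` and `b`
occurrences of `x`. -/
noncomputable def CB (a b : ℕ) : FreeBi kk :=
  ∑ f ∈ Finset.univ.filter
      (fun f : Fin (a + b) → Fin 2 => (Finset.univ.filter (fun i => f i = 0)).card = a),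
    wordB kk f

noncomputable def SB (n a : ℕ) : FreeBi kk :=
  ∑ f ∈ Finset.univ.filter
      (fun f : Fin n → Fin 2 => (Finset.univ.filter (fun i => f i = 0)).card = a),
    wordB kk f

lemma CB_eq_SB (a b : ℕ) : CB kk a b = SB kk (a + b) a := rfl

lemma SB_zero (a : ℕ) : SB kk 0 a = if a = 0 then 1 else 0 := by
  unfold SB
  rcases Nat.eq_zero_or_pos a with h | h
  · subst h
    rw [if_pos rfl, Finset.filter_true_of_mem (fun f _ => by simp)]
    rw [Fintype.sum_eq_single (fun i : Fin 0 => (0 : Fin 2)) (fun f hf => by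
      exact absurd (Subsingleton.elim _ _) hf)]
    simp [wordB]
  · rw [if_neg (by omega)]
    have he : (Finset.univ.filter
        (fun f : Fin 0 → Fin 2 => (Finset.univ.filter (fun i => f i = 0)).card = a)) = ∅ := by
      rw [Finset.filter_eq_empty_iff]
      intro f _
      have : (Finset.univ.filter (fun i : Fin 0 => f i = 0)).card ≤ 0 := by
        simpa using Finset.card_filter_le (Finset.univ : Finset (Fin 0)) _
      omega
    rw [he, Finset.sum_empty]

lemma SB_of_gt (n a : ℕ) (h : n < a) : SB kk n a = 0 := by
  unfold SB
  have he : (Finset.univ.filter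
      (fun f : Fin n → Fin 2 => (Finset.univ.filter (fun i => f i = 0)).card = a)) = ∅ := by
    rw [Finset.filter_eq_empty_iff]
    intro f _
    have : (Finset.univ.filter (fun i : Fin n => f i = 0)).card ≤ n := by
      simpa using Finset.card_filter_le (Finset.univ : Finset (Fin n)) _
    omega
  rw [he, Finset.sum_empty]

lemma wordB_cons {n : ℕ} (c : Fin 2) (t : Fin n → Fin 2) :
    wordB kk (Fin.cons c t) = FreeAlgebra.ι kk c * wordB kk t := by
  unfold wordB
  rw [List.ofFn_succ]
  simp [Fin.cons_succ]

lemma count_cons {n : ℕ} (c : Fin 2) (t : Fin n → Fin 2) :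
    (Finset.univ.filter (fun i : Fin (n+1) => (Fin.cons c t : Fin (n+1) → Fin 2) i = 0)).card
      = (if c = 0 then 1 else 0) + (Finset.univ.filter (fun i => t i = 0)).card := by
  rw [Finset.card_filter, Finset.card_filter, Fin.sum_univ_succ]
  simp [Fin.cons_succ]

lemma SB_succ (n a : ℕ) :
    SB kk (n + 1) a =
      (if a = 0 then 0 else gB kk * SB kk n (a - 1)) + xB kk * SB kk n a := by
  rw [show SB kk (n+1) a = ∑ f : Fin (n+1) → Fin 2,
      if (Finset.univ.filter (fun i => f i = 0)).card = a then wordB kk f else 0 by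
    rw [SB, Finset.sum_filter]]
  rw [← Equiv.sum_comp (Fin.consEquiv (fun _ : Fin (n+1) => Fin 2))]
  rw [Fintype.sum_prod_type, Fin.sum_univ_two]
  simp only [Fin.consEquiv_apply, wordB_cons, count_cons]
  norm_num
  congr 1
  · rcases Nat.eq_zero_or_pos a with h | h
    · subst h
      rw [if_pos rfl, Finset.sum_eq_zero]
      intro t _
      rw [if_neg (by omega)]
    · rw [if_neg (by omega), SB, Finset.mul_sum, Finset.sum_filter]
      apply Finset.sum_congr rfl
      intro t _
      have : 1 + (Finset.univ.filter (fun i => t i = 0)).card = a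
          ↔ (Finset.univ.filter (fun i => t i = 0)).card = a - 1 := by omega
      rw [if_congr this rfl rfl]
      split
      · show wordB kk (Fin.cons (0 : Fin 2) t) = gB kk * wordB kk t
        rw [wordB_cons, gB]
      · rfl
  · rw [SB, Finset.mul_sum, Finset.sum_filter]
    apply Finset.sum_congr rfl
    intro t _
    split
    · show wordB kk (Fin.cons (1 : Fin 2) t) = xB kk * wordB kk t
      rw [wordB_cons, xB]
    · rfl

open TensorProduct in
/-- The comultiplication of the free bialgebra, determined by
`Δ(g) = g ⊗ g` and `Δ(x) = x ⊗ 1 + g ⊗ x`. -/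
noncomputable def DeltaB : FreeBi kk →ₐ[kk] FreeBi kk ⊗[kk] FreeBi kk :=
  FreeAlgebra.lift kk
    (fun i => if i = 0 then gB kk ⊗ₜ[kk] gB kk else xB kk ⊗ₜ[kk] 1 + gB kk ⊗ₜ[kk] xB kk)

open TensorProduct

lemma SB_x_pow (k : ℕ) : SB kk (k+1) 0 = xB kk * SB kk k 0 := by
  rw [SB_succ, if_pos rfl, zero_add]

lemma DeltaB_g : DeltaB kk (gB kk) = gB kk ⊗ₜ[kk] gB kk := by
  rw [gB, DeltaB, FreeAlgebra.lift_ι_apply, if_pos rfl]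
  rfl

lemma DeltaB_x : DeltaB kk (xB kk) = xB kk ⊗ₜ[kk] 1 + gB kk ⊗ₜ[kk] xB kk := by
  rw [xB, DeltaB, FreeAlgebra.lift_ι_apply, if_neg (by decide)]
  rfl

theorem DeltaB_SB : ∀ n p q, p + q = n →
    DeltaB kk (SB kk n p)
      = ∑ k ∈ Finset.range (q+1), SB kk n (p+k) ⊗ₜ[kk] SB kk (p+k) p := by
  intro n
  induction n with
  | zero =>
    intro p q h
    obtain rfl : p = 0 := by omega
    obtain rfl : q = 0 := by omega
    rw [Finset.sum_range_one]
    simp [SB_zero, Algebra.TensorProduct.one_def]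
  | succ m ih =>
    intro p q h
    have hD : DeltaB kk (SB kk m p)
        = ∑ k ∈ Finset.range q, SB kk m (p+k) ⊗ₜ[kk] SB kk (p+k) p := by
      cases q with
      | zero => rw [SB_of_gt kk m p (by omega), map_zero, Finset.range_zero, Finset.sum_empty]
      | succ q' => exact ih p q' (by omega)
    rcases p with _ | p'
    · -- p = 0
      obtain rfl : q = m + 1 := by omega
      rw [SB_succ, if_pos rfl, zero_add, map_mul, DeltaB_x, hD]
      simp only [Nat.zero_add]
      rw [add_mul, Finset.mul_sum, Finset.mul_sum]
      simp only [Algebra.TensorProduct.tmul_mul_tmul, one_mul]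
      have e1 : ∑ k ∈ Finset.range (m+1+1), SB kk (m+1) k ⊗ₜ[kk] SB kk k 0
          = (∑ k ∈ Finset.range (m+1+1),
              (if k = 0 then (0:FreeBi kk) else gB kk * SB kk m (k-1)) ⊗ₜ[kk] SB kk k 0)
            + ∑ k ∈ Finset.range (m+1+1), (xB kk * SB kk m k) ⊗ₜ[kk] SB kk k 0 := by
        rw [← Finset.sum_add_distrib]
        exact Finset.sum_congr rfl fun k _ => by rw [SB_succ, TensorProduct.add_tmul]
      have e2 : (∑ k ∈ Finset.range (m+1+1),
            (if k = 0 then (0:FreeBi kk) else gB kk * SB kk m (k-1)) ⊗ₜ[kk] SB kk k 0)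
          = ∑ k ∈ Finset.range (m+1), (gB kk * SB kk m k) ⊗ₜ[kk] (xB kk * SB kk k 0) := by
        rw [Finset.sum_range_succ']
        have h0 : (if (0:ℕ) = 0 then (0:FreeBi kk) else gB kk * SB kk m (0-1)) ⊗ₜ[kk] SB kk 0 0
            = 0 := by
          rw [if_pos rfl, TensorProduct.zero_tmul]
        rw [h0, add_zero]
        refine Finset.sum_congr rfl fun k _ => ?_
        rw [if_neg (Nat.succ_ne_zero k), Nat.add_sub_cancel, SB_x_pow]
      have e3 : ∑ k ∈ Finset.range (m+1+1), (xB kk * SB kk m k) ⊗ₜ[kk] SB kk k 0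
          = ∑ k ∈ Finset.range (m+1), (xB kk * SB kk m k) ⊗ₜ[kk] SB kk k 0 := by
        rw [Finset.sum_range_succ, SB_of_gt kk m (m+1) (by omega), mul_zero,
          TensorProduct.zero_tmul, add_zero]
      rw [e1, e2, e3, add_comm]
    · -- p = p' + 1
      rw [SB_succ, if_neg (Nat.succ_ne_zero p'), map_add, map_mul, map_mul, DeltaB_g, DeltaB_x]
      simp only [Nat.add_sub_cancel]
      rw [ih p' q (by omega), hD]
      rw [add_mul, Finset.mul_sum, Finset.mul_sum, Finset.mul_sum]
      simp only [Algebra.TensorProduct.tmul_mul_tmul, one_mul]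
      have f1 : ∑ k ∈ Finset.range (q+1), SB kk (m+1) (p'+1+k) ⊗ₜ[kk] SB kk (p'+1+k) (p'+1)
          = (∑ k ∈ Finset.range (q+1), (gB kk * SB kk m (p'+k)) ⊗ₜ[kk] SB kk (p'+1+k) (p'+1))
            + ∑ k ∈ Finset.range (q+1),
                (xB kk * SB kk m (p'+1+k)) ⊗ₜ[kk] SB kk (p'+1+k) (p'+1) := by
        rw [← Finset.sum_add_distrib]
        refine Finset.sum_congr rfl fun k _ => ?_
        have h1 : p'+1+k = (p'+k) + 1 := by omega
        rw [h1, SB_succ, if_neg (by omega), Nat.add_sub_cancel, TensorProduct.add_tmul]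
      have f2 : ∑ k ∈ Finset.range (q+1),
            (xB kk * SB kk m (p'+1+k)) ⊗ₜ[kk] SB kk (p'+1+k) (p'+1)
          = ∑ k ∈ Finset.range q, (xB kk * SB kk m (p'+1+k)) ⊗ₜ[kk] SB kk (p'+1+k) (p'+1) := by
        rw [Finset.sum_range_succ, SB_of_gt kk m (p'+1+q) (by omega), mul_zero,
          TensorProduct.zero_tmul, add_zero]
      have f3 : ∑ k ∈ Finset.range (q+1), (gB kk * SB kk m (p'+k)) ⊗ₜ[kk] SB kk (p'+1+k) (p'+1)
          = (∑ k ∈ Finset.range (q+1), (gB kk * SB kk m (p'+k)) ⊗ₜ[kk] (gB kk * SB kk (p'+k) p'))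
            + ∑ k ∈ Finset.range q,
                (gB kk * SB kk m (p'+1+k)) ⊗ₜ[kk] (xB kk * SB kk (p'+1+k) (p'+1)) := by
        have g1 : ∀ k, SB kk (p'+1+k) (p'+1)
            = gB kk * SB kk (p'+k) p' + xB kk * SB kk (p'+k) (p'+1) := by
          intro k
          have h1 : p'+1+k = (p'+k) + 1 := by omega
          rw [h1, SB_succ, if_neg (Nat.succ_ne_zero p'), Nat.add_sub_cancel]
        have g2 : ∑ k ∈ Finset.range (q+1),
              (gB kk * SB kk m (p'+k)) ⊗ₜ[kk] (xB kk * SB kk (p'+k) (p'+1))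
            = ∑ k ∈ Finset.range q,
                (gB kk * SB kk m (p'+1+k)) ⊗ₜ[kk] (xB kk * SB kk (p'+1+k) (p'+1)) := by
          rw [Finset.sum_range_succ']
          simp only [Nat.add_zero]
          rw [SB_of_gt kk p' (p'+1) (by omega), mul_zero, TensorProduct.tmul_zero, add_zero]
          refine Finset.sum_congr rfl fun k _ => ?_
          have h1 : p'+(k+1) = p'+1+k := by omega
          rw [h1]
        rw [← g2, ← Finset.sum_add_distrib]
        refine Finset.sum_congr rfl fun k _ => ?_
        rw [g1 k, TensorProduct.tmul_add]
      rw [f1, f2, f3]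
      abel

theorem DeltaB_CB (p q : ℕ) :
    DeltaB kk (CB kk p q)
      = ∑ k ∈ Finset.range (q+1), CB kk (p+k) (q-k) ⊗ₜ[kk] CB kk p k := by
  rw [CB_eq_SB, DeltaB_SB kk (p+q) p q rfl]
  refine Finset.sum_congr rfl fun k hk => ?_
  have hk' : k ≤ q := by
    have := Finset.mem_range.mp hk; omega
  rw [CB_eq_SB, CB_eq_SB]
  have h1 : p + k + (q - k) = p + q := by omega
  rw [h1]

open TensorProduct PiTensorProduct in
/-- The iterated comultiplication `Δ^{(n)} : B → B^{⊗ n}` (here indexed so that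
`DI n = Δ^{(n+1)}`), defined by `Δ^{(1)} = id` and `Δ^{(n+1)} = (Δ^{(n)} ⊗ id) ∘ Δ`,
valued in the `PiTensorProduct`. -/
noncomputable def DI : (n : ℕ) → FreeBi kk →ₗ[kk] ⨂[kk] (_ : Fin (n + 1)), FreeBi kk
  | 0 => (PiTensorProduct.subsingletonEquiv (R := kk) (s := fun _ : Fin 1 => FreeBi kk)
      (0 : Fin 1)).symm.toLinearMap
  | (n + 1) =>
      (PiTensorProduct.reindex kk (fun _ : Fin (n + 1) ⊕ Fin 1 => FreeBi kk)
          finSumFinEquiv).toLinearMap ∘ₗ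
        (PiTensorProduct.tmulEquiv kk (FreeBi kk)).toLinearMap ∘ₗ
          (TensorProduct.map (DI n)
            (PiTensorProduct.subsingletonEquiv (0 : Fin 1)).symm.toLinearMap) ∘ₗ
            (DeltaB kk).toLinearMap

/-- `partialSum K m = k_1 + ⋯ + k_m` for a tuple `K = (k_1, …, k_n)`. -/
def partialSum {n : ℕ} (K : Fin n → ℕ) (m : ℕ) : ℕ :=
  ∑ t : Fin n, if (t : ℕ) < m then K t else 0

/-- The `i`-th tensor factor in the expansion of `Δ^{(n+1)}(C_{p,q})`:
the leftmost (i = 0) factor is `C_{p+k_1+⋯+k_n, q-(k_1+⋯+k_n)}` and the factor at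
position `i ≥ 1` is `C_{p+k_1+⋯+k_{n-i}, k_{n-i+1}}` (so the rightmost is `C_{p,k_1}`). -/
noncomputable def DIfactor (p : ℕ) (q : ℕ) {n : ℕ} (K : Fin n → ℕ) (i : Fin (n + 1)) :
    FreeBi kk :=
  if h : (i : ℕ) = 0 then CB kk (p + partialSum K n) (q - partialSum K n)
  else CB kk (p + partialSum K (n - (i : ℕ))) (K ⟨n - (i : ℕ), by omega⟩)

lemma partialSum_zero {n : ℕ} (K : Fin n → ℕ) : partialSum K 0 = 0 := by
  unfold partialSum
  simp

lemma partialSum_cons {n : ℕ} (k : ℕ) (K' : Fin n → ℕ) (m : ℕ) :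
    partialSum (Fin.cons k K') (m + 1) = k + partialSum K' m := by
  unfold partialSum
  rw [Fin.sum_univ_succ, Fin.cons_zero, if_pos (by simp)]
  congr 1
  refine Finset.sum_congr rfl fun t _ => ?_
  rw [Fin.cons_succ]
  have : ((t.succ : Fin (n+1)) : ℕ) < m + 1 ↔ (t : ℕ) < m := by
    simp [Fin.val_succ]
  rw [if_congr this rfl rfl]

lemma partialSum_all {n : ℕ} (K : Fin n → ℕ) {m : ℕ} (h : n ≤ m) :
    partialSum K m = ∑ t, K t := by
  unfold partialSum
  refine Finset.sum_congr rfl fun t _ => ?_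
  rw [if_pos (by have := t.is_lt; omega)]

lemma factor_eq (p q k n : ℕ) (K' : Fin n → ℕ) :
    (fun i : Fin (n + 1 + 1) =>
        Sum.elim (DIfactor kk (p + k) (q - k) K') (fun _ : Fin 1 => CB kk p k)
          (finSumFinEquiv.symm i))
      = DIfactor kk p q (Fin.cons k K') := by
  funext i
  rcases Nat.lt_or_ge (i : ℕ) (n + 1) with hi | hi
  · have hieq : i = Fin.castAdd 1 (⟨(i : ℕ), hi⟩ : Fin (n+1)) := by
      ext; rfl
    rw [hieq, finSumFinEquiv_symm_apply_castAdd]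
    show DIfactor kk (p + k) (q - k) K' ⟨(i : ℕ), hi⟩
        = DIfactor kk p q (Fin.cons k K') (Fin.castAdd 1 ⟨(i : ℕ), hi⟩)
    rcases Nat.eq_zero_or_pos (i : ℕ) with h0 | h0
    · unfold DIfactor
      simp only [Fin.coe_castAdd, Fin.val_mk]
      rw [dif_pos h0, dif_pos h0]
      have e1 : partialSum (Fin.cons k K' : Fin (n+1) → ℕ) (n + 1) = k + partialSum K' n :=
        partialSum_cons k K' n
      rw [e1]
      have e2 : p + (k + partialSum K' n) = p + k + partialSum K' n := by omega
      have e3 : q - (k + partialSum K' n) = q - k - partialSum K' n := by omega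
      rw [e2, e3]
    · unfold DIfactor
      simp only [Fin.coe_castAdd, Fin.val_mk]
      rw [dif_neg (by omega), dif_neg (by omega)]
      have hle : (i : ℕ) ≤ n := by omega
      have e0 : n + 1 - (i : ℕ) = (n - (i : ℕ)) + 1 := by omega
      have e1 : partialSum (Fin.cons k K' : Fin (n+1) → ℕ) (n + 1 - (i : ℕ))
          = k + partialSum K' (n - (i : ℕ)) := by
        rw [e0, partialSum_cons]
      rw [e1]
      have e2 : p + (k + partialSum K' (n - (i : ℕ))) = p + k + partialSum K' (n - (i : ℕ)) := by
        omega
      rw [e2]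
      congr 1
      have e3 : (⟨n + 1 - (i : ℕ), by omega⟩ : Fin (n+1))
          = Fin.succ ⟨n - (i : ℕ), by omega⟩ := by
        ext
        simp [Fin.val_succ]
        omega
      rw [e3, Fin.cons_succ]
  · have hi' : (i : ℕ) = n + 1 := by have := i.is_lt; omega
    have hieq : i = Fin.natAdd (n+1) (⟨0, by omega⟩ : Fin 1) := by
      ext; simp [hi']
    rw [hieq, finSumFinEquiv_symm_apply_natAdd]
    show CB kk p k = DIfactor kk p q (Fin.cons k K') (Fin.natAdd (n+1) ⟨0, by omega⟩)
    unfold DIfactor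
    rw [dif_neg (by simp)]
    have e1 : n + 1 - ((Fin.natAdd (n+1) (⟨0, by omega⟩ : Fin 1) : Fin (n+1+1)) : ℕ) = 0 := by
      simp
    rw [show partialSum (Fin.cons k K' : Fin (n+1) → ℕ)
          (n + 1 - ((Fin.natAdd (n+1) (⟨0, by omega⟩ : Fin 1) : Fin (n+1+1)) : ℕ)) = 0 by
        rw [e1, partialSum_zero]]
    rw [Nat.add_zero]
    congr 1
    rw [show (⟨n + 1 - ((Fin.natAdd (n+1) (⟨0, by omega⟩ : Fin 1) : Fin (n+1+1)) : ℕ), by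
        omega⟩ : Fin (n+1)) = (0 : Fin (n+1)) by ext; simp [e1]]
    rw [Fin.cons_zero]

lemma sum_cons_split {M : Type*} [AddCommMonoid M] (q n : ℕ) (F : (Fin (n+1) → ℕ) → M) :
    ∑ K ∈ (Fintype.piFinset fun _ : Fin (n+1) => Finset.range (q + 1)).filter
        (fun K => ∑ m, K m ≤ q), F K
      = ∑ k ∈ Finset.range (q+1),
          ∑ K' ∈ (Fintype.piFinset fun _ : Fin n => Finset.range ((q - k) + 1)).filter
            (fun K' => ∑ m, K' m ≤ q - k), F (Fin.cons k K') := by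
  rw [Finset.sum_sigma']
  refine Finset.sum_nbij' (fun K => ⟨K 0, Fin.tail K⟩)
    (fun x => Fin.cons x.1 x.2) ?_ ?_ ?_ ?_ ?_
  · intro K hK
    simp only [Finset.mem_filter, Fintype.mem_piFinset, Finset.mem_range] at hK
    obtain ⟨h1, h2⟩ := hK
    have hsum : ∑ m, K m = K 0 + ∑ m, Fin.tail K m := by
      rw [Fin.sum_univ_succ]; rfl
    simp only [Finset.mem_sigma, Finset.mem_filter, Fintype.mem_piFinset, Finset.mem_range]
    refine ⟨by have := h1 0; omega, fun m => ?_, by omega⟩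
    have : Fin.tail K m ≤ ∑ j, Fin.tail K j :=
      Finset.single_le_sum (f := Fin.tail K) (fun _ _ => Nat.zero_le _) (Finset.mem_univ m)
    omega
  · intro x hx
    simp only [Finset.mem_sigma, Finset.mem_filter, Fintype.mem_piFinset, Finset.mem_range] at hx
    obtain ⟨h1, h2, h3⟩ := hx
    have hsum : ∑ m, Fin.cons x.1 x.2 m = x.1 + ∑ m, x.2 m := by
      rw [Fin.sum_univ_succ, Fin.cons_zero]
      congr 1
    simp only [Finset.mem_filter, Fintype.mem_piFinset, Finset.mem_range]
    constructor
    · intro m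
      refine Fin.cases ?_ ?_ m
      · rw [Fin.cons_zero]; omega
      · intro j; rw [Fin.cons_succ]; have := h2 j; omega
    · omega
  · intro K _
    exact Fin.cons_self_tail K
  · intro x _
    cases x with
    | mk k K' => simp [Fin.tail_cons]
  · intro K _
    rw [Fin.cons_self_tail]

lemma subsing_symm (y : FreeBi kk) :
    (PiTensorProduct.subsingletonEquiv (0 : Fin 1) (R := kk) (s := fun _ : Fin 1 => FreeBi kk)).symm y
      = PiTensorProduct.tprod kk (fun _ : Fin 1 => y) := by
  rw [LinearEquiv.symm_apply_eq, PiTensorProduct.subsingletonEquiv_apply_tprod]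

open TensorProduct PiTensorProduct in
/-- `Δ^{(n+1)}(C_{p,q}) = Σ_{k_1+⋯+k_n ≤ q}
`C_{p+k_1+⋯+k_n,q-(k_1+⋯+k_n)} ⊗ C_{p+k_1+⋯+k_{n-1},k_n} ⊗ ⋯ ⊗ C_{p+k_1,k_2} ⊗ C_{p,k_1}`. -/
theorem DI_CB (n p q : ℕ) :
    DI kk n (CB kk p q) =
      ∑ K ∈ (Fintype.piFinset fun _ : Fin n => Finset.range (q + 1)).filter
          (fun K => ∑ m, K m ≤ q),
        PiTensorProduct.tprod kk (DIfactor kk p q K) := by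

  induction n generalizing p q with
  | zero =>
    have hset : (Fintype.piFinset fun _ : Fin 0 => Finset.range (q + 1)).filter
        (fun K => ∑ m, K m ≤ q) = {fun _ => 0} := by
      apply Finset.eq_singleton_iff_unique_mem.mpr
      constructor
      · simp only [Finset.mem_filter, Fintype.mem_piFinset, Finset.mem_range]
        exact ⟨fun m => m.elim0, by simp⟩
      · intro K _
        funext i
        exact i.elim0
    rw [hset, Finset.sum_singleton]
    show (PiTensorProduct.subsingletonEquiv (R := kk) (s := fun _ : Fin 1 => FreeBi kk)
      (0 : Fin 1)).symm.toLinearMap (CB kk p q) = _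
    rw [LinearEquiv.coe_toLinearMap, subsing_symm]
    congr 1
    funext i
    have hi : (i : ℕ) = 0 := by omega
    unfold DIfactor
    rw [dif_pos hi, partialSum_zero, Nat.add_zero, Nat.sub_zero]
  | succ n ih =>
    simp only [DI, LinearMap.coe_comp, Function.comp_apply, LinearEquiv.coe_coe,
      AlgHom.toLinearMap_apply]
    rw [DeltaB_CB, map_sum, map_sum, map_sum]
    rw [sum_cons_split q n (fun K => PiTensorProduct.tprod kk (DIfactor kk p q K))]
    refine Finset.sum_congr rfl fun k hk => ?_
    rw [TensorProduct.map_tmul, ih (p+k) (q-k)]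
    rw [LinearEquiv.coe_toLinearMap, subsing_symm]
    rw [TensorProduct.sum_tmul, map_sum, map_sum]
    refine Finset.sum_congr rfl fun K' hK' => ?_
    rw [PiTensorProduct.tmulEquiv_apply, PiTensorProduct.reindex_tprod]
    congr 1
    exact factor_eq kk p q k n K'
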